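/- Let 𝔽 be a field, let l ≥ 1, and let p_1,…,p_l ∈ 𝔽∖{0} be multiplicatively independent (i.e. p_1^{a_1}⋯p_l^{a_l} = 1 with a_s ∈ ℤ forces a_1 = ⋯ = a_l = 0). For each pair (i,j) with 1 ≤ i < j ≤ n let m_{(ij),1},…,m_{(ij),l} ∈ ℤ be given, and let λ : ℤ^n × ℤ^n → 𝔽∖{0} be the alternating bicharacter determined by λ(e_i,e_j) = ∏_{s=1}^l p_s^{m_{(ij),s}} for i < j, i.e. λ(γ,γ') = ∏_{i<j} (∏_s p_s^{m_{(ij),s}})^{γ_iγ'_j − γ_jγ'_i}. Then for every A ∈ GL(n,ℤ), the transpose Aᵗ preserves λ (i.e. λ(Aᵗγ, Aᵗγ') = λ(γ,γ') for all γ,γ' ∈ ℤ^n) if and only if for every pair i < j and every s ∈ {1,…,l} one has Σ_{u<v} (A_{iu}A_{jv} − A_{iv}A_{ju}) m_{(uv),s} = m_{(ij),s}; that is, if and only if the exterior square ∧²A fixes every column of the exponent matrix M = (m_{(ij),s}). -/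

import Mathlib

/-- The alternating bicharacter on `ℤ^n` with `λ(e i, e j) = ∏ s, p s ^ m i j s` for `i < j`. -/
def bicharOfExponents {F : Type*} [Field F] {l n : ℕ} (p : Fin l → Fˣ)
    (m : Fin n → Fin n → Fin l → ℤ) (γ γ' : Fin n → ℤ) : Fˣ :=
  ∏ i : Fin n, ∏ j : Fin n,
    if i < j then (∏ s : Fin l, p s ^ m i j s) ^ (γ i * γ' j - γ j * γ' i) else 1

section Aux

variable {l n : ℕ}

private lemma zpow_sum' {G ι : Type*} [CommGroup G] (x : G) (s : Finset ι) (f : ι → ℤ) :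
    x ^ (∑ i ∈ s, f i) = ∏ i ∈ s, x ^ f i := by
  induction s using Finset.cons_induction with
  | empty => simp
  | cons a s ha ih => rw [Finset.sum_cons, Finset.prod_cons, zpow_add, ih]

private lemma sum_comm4 {M α : Type*} [AddCommMonoid M] [Fintype α]
    (F : α → α → α → α → M) :
    ∑ i, ∑ j, ∑ u, ∑ v, F i j u v = ∑ u, ∑ v, ∑ i, ∑ j, F i j u v :=
  calc ∑ i, ∑ j, ∑ u, ∑ v, F i j u v
      = ∑ i, ∑ u, ∑ j, ∑ v, F i j u v :=
        Finset.sum_congr rfl fun i _ => Finset.sum_comm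
    _ = ∑ u, ∑ i, ∑ j, ∑ v, F i j u v := Finset.sum_comm
    _ = ∑ u, ∑ i, ∑ v, ∑ j, F i j u v :=
        Finset.sum_congr rfl fun u _ => Finset.sum_congr rfl fun i _ => Finset.sum_comm
    _ = ∑ u, ∑ v, ∑ i, ∑ j, F i j u v :=
        Finset.sum_congr rfl fun u _ => Finset.sum_comm

/-- The exponent of `p s` in the bicharacter. -/
private def expE (m : Fin n → Fin n → Fin l → ℤ) (γ γ' : Fin n → ℤ) (s : Fin l) : ℤ :=
  ∑ i, ∑ j, if i < j then m i j s * (γ i * γ' j - γ j * γ' i) else 0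

private def mprime (m : Fin n → Fin n → Fin l → ℤ) (u v : Fin n) (s : Fin l) : ℤ :=
  if u < v then m u v s else if v < u then -(m v u s) else 0

private def cc (A : Matrix (Fin n) (Fin n) ℤ) (m : Fin n → Fin n → Fin l → ℤ)
    (u v : Fin n) (s : Fin l) : ℤ :=
  ∑ i, ∑ j, if i < j then m i j s * (A u i * A v j - A u j * A v i) else 0

private lemma bichar_eq_prod {F : Type*} [Field F] (p : Fin l → Fˣ)
    (m : Fin n → Fin n → Fin l → ℤ) (γ γ' : Fin n → ℤ) :
    bicharOfExponents p m γ γ' = ∏ s, p s ^ expE m γ γ' s := by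
  unfold bicharOfExponents expE
  have step : ∀ i j : Fin n,
      (if i < j then (∏ s, p s ^ m i j s) ^ (γ i * γ' j - γ j * γ' i) else 1)
        = ∏ s, p s ^ (if i < j then m i j s * (γ i * γ' j - γ j * γ' i) else 0) := by
    intro i j
    split_ifs with h
    · rw [← Finset.prod_zpow]
      exact Finset.prod_congr rfl fun s _ => (zpow_mul (p s) _ _).symm
    · simp
  simp only [step]
  calc ∏ i, ∏ j, ∏ s, p s ^ (if i < j then m i j s * (γ i * γ' j - γ j * γ' i) else 0)
      = ∏ i, ∏ s, ∏ j, p s ^ (if i < j then m i j s * (γ i * γ' j - γ j * γ' i) else 0) :=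
        Finset.prod_congr rfl fun i _ => Finset.prod_comm
    _ = ∏ s, ∏ i, ∏ j, p s ^ (if i < j then m i j s * (γ i * γ' j - γ j * γ' i) else 0) :=
        Finset.prod_comm
    _ = ∏ s, p s ^ (∑ i, ∑ j, if i < j then m i j s * (γ i * γ' j - γ j * γ' i) else 0) := by
        refine Finset.prod_congr rfl fun s _ => ?_
        rw [zpow_sum']
        exact Finset.prod_congr rfl fun i _ => (zpow_sum' _ _ _).symm

private lemma prod_zpow_inj {F : Type*} [Field F] (p : Fin l → Fˣ)
    (hp : ∀ a : Fin l → ℤ, (∏ s, p s ^ a s) = 1 → a = 0)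
    {a b : Fin l → ℤ} (h : (∏ s, p s ^ a s) = ∏ s, p s ^ b s) : a = b := by
  have h1 : (∏ s, p s ^ ((a - b) s)) = 1 := by
    have e : ∀ s : Fin l, p s ^ ((a - b) s) = p s ^ a s / p s ^ b s := fun s => by
      simp [Pi.sub_apply, zpow_sub, div_eq_mul_inv]
    simp only [e, Finset.prod_div_distrib, h, div_self']
  exact sub_eq_zero.mp (hp (a - b) h1)

private lemma expE_eq (m : Fin n → Fin n → Fin l → ℤ) (γ γ' : Fin n → ℤ) (s : Fin l) :
    expE m γ γ' s = ∑ u, ∑ v, γ u * γ' v * mprime m u v s := by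
  have key : ∀ u v : Fin n, γ u * γ' v * mprime m u v s
      = (if u < v then γ u * γ' v * m u v s else 0)
        + (if v < u then γ u * γ' v * (-(m v u s)) else 0) := by
    intro u v
    unfold mprime
    rcases lt_trichotomy u v with h | h | h
    · simp [h, lt_asymm h]
    · simp [h, lt_irrefl]
    · simp [h, lt_asymm h]
  simp only [key, Finset.sum_add_distrib]
  rw [Finset.sum_comm (f := fun u v => if v < u then γ u * γ' v * (-(m v u s)) else 0)]
  rw [← Finset.sum_add_distrib]
  unfold expE
  refine Finset.sum_congr rfl fun u _ => ?_
  rw [← Finset.sum_add_distrib]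
  refine Finset.sum_congr rfl fun v _ => ?_
  split_ifs with h <;> ring

private lemma expE_mulVec (A : Matrix (Fin n) (Fin n) ℤ)
    (m : Fin n → Fin n → Fin l → ℤ) (γ γ' : Fin n → ℤ) (s : Fin l) :
    expE m (A.transpose.mulVec γ) (A.transpose.mulVec γ') s
      = ∑ u, ∑ v, γ u * γ' v * cc A m u v s := by
  unfold expE
  have step : ∀ i j : Fin n,
      (if i < j then m i j s * ((A.transpose.mulVec γ) i * (A.transpose.mulVec γ') j
          - (A.transpose.mulVec γ) j * (A.transpose.mulVec γ') i) else 0)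
      = ∑ u, ∑ v, (if i < j then γ u * γ' v
          * (m i j s * (A u i * A v j - A u j * A v i)) else 0) := by
    intro i j
    split_ifs with h
    · simp only [Matrix.mulVec, dotProduct, Matrix.transpose_apply]
      rw [Finset.sum_mul_sum, Finset.sum_mul_sum, ← Finset.sum_sub_distrib, Finset.mul_sum]
      refine Finset.sum_congr rfl fun u _ => ?_
      rw [← Finset.sum_sub_distrib, Finset.mul_sum]
      exact Finset.sum_congr rfl fun v _ => by ring
    · simp
  simp only [step]
  rw [sum_comm4]
  refine Finset.sum_congr rfl fun u _ => Finset.sum_congr rfl fun v _ => ?_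
  unfold cc
  simp only [Finset.mul_sum, mul_ite, mul_zero]

private lemma expE_single (m : Fin n → Fin n → Fin l → ℤ) {i j : Fin n} (hij : i < j)
    (s : Fin l) :
    expE m (Pi.single i (1 : ℤ)) (Pi.single j (1 : ℤ)) s = m i j s := by
  rw [expE_eq]
  rw [Finset.sum_eq_single i]
  · rw [Finset.sum_eq_single j]
    · simp [mprime, hij]
    · intro b _ hb
      simp [Pi.single_apply, hb]
    · simp
  · intro a _ ha
    simp [Pi.single_apply, ha]
  · simp

end Aux

theorem transpose_preserves_bichar_iff_extSquare_fixes_columns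
    (F : Type*) [Field F] (l : ℕ) (hl : 1 ≤ l) (p : Fin l → Fˣ)
    (hp : ∀ a : Fin l → ℤ, (∏ s, p s ^ a s) = 1 → a = 0)
    (n : ℕ) (m : Fin n → Fin n → Fin l → ℤ)
    (A : Matrix (Fin n) (Fin n) ℤ) (hA : IsUnit A.det) :
    (∀ γ γ' : Fin n → ℤ,
        bicharOfExponents p m (A.transpose.mulVec γ) (A.transpose.mulVec γ')
          = bicharOfExponents p m γ γ') ↔
      (∀ i j : Fin n, i < j → ∀ s : Fin l,
        (∑ u : Fin n, ∑ v : Fin n,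
          if u < v then (A i u * A j v - A i v * A j u) * m u v s else 0) = m i j s) := by
  constructor
  · intro h i j hij s
    have h2 := h (Pi.single i 1) (Pi.single j 1)
    rw [bichar_eq_prod, bichar_eq_prod] at h2
    have h3 := prod_zpow_inj p hp h2
    have h4 := congrFun h3 s
    rw [expE_single m hij s] at h4
    rw [← h4]
    unfold expE
    refine Finset.sum_congr rfl fun u _ => Finset.sum_congr rfl fun v _ => ?_
    simp only [Matrix.mulVec_single_one, Matrix.col_apply, Matrix.transpose_apply, mul_one]
    split_ifs with hlt
    · ring
    · rfl
  · intro h γ γ'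
    rw [bichar_eq_prod, bichar_eq_prod]
    refine Finset.prod_congr rfl fun s _ => ?_
    congr 1
    rw [expE_mulVec, expE_eq]
    refine Finset.sum_congr rfl fun u _ => Finset.sum_congr rfl fun v _ => ?_
    congr 1
    -- show cc A m u v s = mprime m u v s
    have hc : ∀ a b : Fin n, a < b → cc A m a b s = m a b s := by
      intro a b hab
      have e : cc A m a b s
          = ∑ x, ∑ y, if x < y then (A a x * A b y - A a y * A b x) * m x y s else 0 :=
        Finset.sum_congr rfl fun x _ => Finset.sum_congr rfl fun y _ => by
          split_ifs <;> ring
      rw [e, h a b hab s]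
    have anti : ∀ a b : Fin n, cc A m a b s = - cc A m b a s := by
      intro a b
      unfold cc
      rw [← Finset.sum_neg_distrib]
      refine Finset.sum_congr rfl fun x _ => ?_
      rw [← Finset.sum_neg_distrib]
      refine Finset.sum_congr rfl fun y _ => ?_
      split_ifs <;> ring
    unfold mprime
    rcases lt_trichotomy u v with hlt | heq | hgt
    · simp only [hlt, if_pos]
      exact hc u v hlt
    · subst heq
      simp only [lt_irrefl, if_false]
      have h0 := anti u u
      omega
    · rw [if_neg (lt_asymm hgt), if_pos hgt, anti u v, hc v u hgt]
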